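/- Let F : ℝ → ℝ be monotone nondecreasing, let U : [0,∞) → ℝ and ℓ : [0,∞) → ℝ be continuous, and define Y : [0,∞) → ℝ by Y(t) = U(t) + ∫₀ᵗ (F(U(s)) − ℓ(s)) ds. If ℓ(t) ≤ F(Y(t)) for all t ≥ 0, then Y(t) ≥ U(t) for all t ≥ 0. -/

import Mathlib

open intervalIntegral

/-- pathwise comparison lemma. If F is nondecreasing, U and ℓ are
continuous on [0,∞), Y(t) = U(t) + ∫₀ᵗ (F(U(s)) − ℓ(s)) ds, and ℓ(t) ≤ F(Y(t))
for all t ≥ 0, then Y(t) ≥ U(t) for all t ≥ 0. -/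
theorem stmt_4 (F U ℓ Y : ℝ → ℝ)
    (hF : Monotone F)
    (hU : ContinuousOn U (Set.Ici 0))
    (hℓ : ContinuousOn ℓ (Set.Ici 0))
    (hY : ∀ t ≥ (0:ℝ), Y t = U t + ∫ s in (0:ℝ)..t, (F (U s) - ℓ s))
    (hbound : ∀ t ≥ (0:ℝ), ℓ t ≤ F (Y t)) :
    ∀ t ≥ (0:ℝ), U t ≤ Y t := by
  intro t₀ ht₀
  by_contra hcon
  push_neg at hcon
  set f : ℝ → ℝ := fun s => F (U s) - ℓ s with hf
  have hmeasU : AEMeasurable U (MeasureTheory.volume.restrict (Set.Icc 0 t₀)) :=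
    (hU.mono Set.Icc_subset_Ici_self).aemeasurable measurableSet_Icc
  have hFU : MeasureTheory.IntegrableOn (fun s => F (U s)) (Set.Icc 0 t₀) := by
    have hcomp : IsCompact (U '' Set.Icc 0 t₀) :=
      isCompact_Icc.image_of_continuousOn (hU.mono Set.Icc_subset_Ici_self)
    obtain ⟨a, ha⟩ := hcomp.bddBelow
    obtain ⟨b, hb⟩ := hcomp.bddAbove
    apply MeasureTheory.Integrable.mono' (g := fun _ => |F a| + |F b|)
    · exact MeasureTheory.integrableOn_const measure_Icc_lt_top.ne
    · exact (hF.measurable.comp_aemeasurable hmeasU).aestronglyMeasurable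
    · filter_upwards [MeasureTheory.ae_restrict_mem measurableSet_Icc] with s hs
      have h1 : F a ≤ F (U s) := hF (ha ⟨s, hs, rfl⟩)
      have h2 : F (U s) ≤ F b := hF (hb ⟨s, hs, rfl⟩)
      rw [Real.norm_eq_abs, abs_le]
      constructor
      · nlinarith [neg_abs_le (F a), abs_nonneg (F b)]
      · nlinarith [le_abs_self (F b), abs_nonneg (F a)]
  have hℓint : MeasureTheory.IntegrableOn ℓ (Set.Icc 0 t₀) :=
    (hℓ.mono Set.Icc_subset_Ici_self).integrableOn_compact isCompact_Icc
  have hfint : MeasureTheory.IntegrableOn f (Set.Icc 0 t₀) := hFU.sub hℓint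
  have hII : ∀ a b, a ∈ Set.Icc (0:ℝ) t₀ → b ∈ Set.Icc (0:ℝ) t₀ →
      IntervalIntegrable f MeasureTheory.volume a b := by
    intro a b ha hb
    exact (hfint.mono_set (Set.uIcc_subset_Icc ha hb)).intervalIntegrable
  set D : ℝ → ℝ := fun t => ∫ s in (0:ℝ)..t, f s with hD
  have hDY : ∀ t ≥ (0:ℝ), D t = Y t - U t := by
    intro t ht
    rw [hY t ht]
    simp [hD, hf]
  have hDcont : ContinuousOn D (Set.Icc 0 t₀) := by
    have h := intervalIntegral.continuousOn_primitive_interval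
      (a := 0) (b := t₀) (f := f) (by rwa [Set.uIcc_of_le ht₀])
    rwa [Set.uIcc_of_le ht₀] at h
  have hD0 : D 0 = 0 := intervalIntegral.integral_same
  have hDt₀ : D t₀ < 0 := by rw [hDY t₀ ht₀]; linarith
  set A := {s | s ∈ Set.Icc (0:ℝ) t₀ ∧ D s = 0} with hA
  have h0A : (0:ℝ) ∈ A := ⟨⟨le_refl 0, ht₀⟩, hD0⟩
  have hbdd : BddAbove A := ⟨t₀, fun s hs => hs.1.2⟩
  have hAclosed : IsClosed A := by
    have : A = Set.Icc (0:ℝ) t₀ ∩ D ⁻¹' {0} := by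
      ext s; simp [hA]
    rw [this]
    exact hDcont.preimage_isClosed_of_isClosed isClosed_Icc isClosed_singleton
  have hcA : sSup A ∈ A := hAclosed.csSup_mem ⟨0, h0A⟩ hbdd
  set c := sSup A with hcdef
  have hc0 : 0 ≤ c := le_csSup hbdd h0A
  have hct₀ : c ≤ t₀ := hcA.1.2
  have hDc : D c = 0 := hcA.2
  have hDneg : ∀ s ∈ Set.Icc c t₀, D s ≤ 0 := by
    intro s hs
    by_contra hpos
    push_neg at hpos
    have hsc : c < s := lt_of_le_of_ne hs.1 (fun h => by rw [← h] at hpos; linarith)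
    have hst : s ≤ t₀ := hs.2
    have hsub : Set.Icc s t₀ ⊆ Set.Icc 0 t₀ :=
      Set.Icc_subset_Icc (le_trans hc0 hs.1) le_rfl
    have hivt : Set.Icc (D t₀) (D s) ⊆ D '' Set.Icc s t₀ :=
      intermediate_value_Icc' hst (hDcont.mono hsub)
    obtain ⟨z, hz, hz0⟩ := hivt ⟨le_of_lt hDt₀, le_of_lt hpos⟩
    have hzA : z ∈ A := ⟨hsub hz, hz0⟩
    have : z ≤ c := le_csSup hbdd hzA
    linarith [hz.1]
  have hnonneg : ∀ s ∈ Set.Icc c t₀, 0 ≤ f s := by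
    intro s hs
    have hs0 : (0:ℝ) ≤ s := le_trans hc0 hs.1
    have h1 : Y s ≤ U s := by
      have := hDneg s hs
      rw [hDY s hs0] at this
      linarith
    have h2 : ℓ s ≤ F (Y s) := hbound s hs0
    have h3 : F (Y s) ≤ F (U s) := hF h1
    simp only [hf]
    linarith
  have hint : 0 ≤ ∫ s in c..t₀, f s :=
    intervalIntegral.integral_nonneg hct₀ hnonneg
  have hsplit : D c + ∫ s in c..t₀, f s = D t₀ :=
    intervalIntegral.integral_add_adjacent_intervals
      (hII 0 c ⟨le_rfl, ht₀⟩ ⟨hc0, hct₀⟩) (hII c t₀ ⟨hc0, hct₀⟩ ⟨ht₀, le_rfl⟩)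
  linarith
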